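/- Let M be the 2 × 2 real matrix M = (1/2)·[[1, −1], [−1, 1]] (the orthogonal projector onto (1/√2)(e₀ − e₁)). Then: (i) for every v : Fin 2 → ℝ with v(i) ≥ 0 for all i and v(0)² + v(1)² = 1, one has ‖M.mulVec v‖ ≤ 1/√2; and (ii) the vector w : Fin 2 × Fin 2 → ℝ with w(0,0) = w(1,1) = 1/√2 and w(0,1) = w(1,0) = 0 has nonnegative entries, unit Euclidean norm, and satisfies ‖(M ⊗ M).mulVec w‖ = 1/√2 > (1/√2)², where M ⊗ M is the Kronecker product. Hence there exists a Hermitian positive semidefinite matrix M for which the maximum of ‖(M ⊗ M)w‖ over nonnegative unit vectors w strictly exceeds the square of the maximum of ‖Mv‖ over nonnegative unit vectors v. -/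

import Mathlib

open Matrix Kronecker

/-- **Parallel repetition fails for nonnegative vectors**
(Fact `max_of_reals_is_not_norm`). Let `M = (1/2)[[1,-1],[-1,1]]` be the
orthogonal projector onto `(e₀ - e₁)/√2`. Then `M` is symmetric positive
semidefinite; every nonnegative unit vector `v ∈ ℝ²` has `‖Mv‖ ≤ 1/√2`; and the
nonnegative unit vector `w = (e₀⊗e₀ + e₁⊗e₁)/√2` satisfies
`‖(M ⊗ M)w‖ = 1/√2 > (1/√2)²`. Hence `‖M ⊗ M‖₊ > ‖M‖₊²`. -/
theorem kronecker_exceeds_square_on_nonneg :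
    ∀ M : Matrix (Fin 2) (Fin 2) ℝ, M = !![1/2, -1/2; -1/2, 1/2] →
    ∀ w : Fin 2 × Fin 2 → ℝ,
      w = (fun p => if p.1 = p.2 then 1 / Real.sqrt 2 else 0) →
    M.IsSymm ∧ M.PosSemidef ∧
      (∀ v : Fin 2 → ℝ, (∀ i, 0 ≤ v i) → v 0 ^ 2 + v 1 ^ 2 = 1 →
        Real.sqrt (∑ i, (M.mulVec v i) ^ 2) ≤ 1 / Real.sqrt 2) ∧
      (∀ p, 0 ≤ w p) ∧
      Real.sqrt (∑ p, (w p) ^ 2) = 1 ∧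
      Real.sqrt (∑ p, ((M ⊗ₖ M).mulVec w p) ^ 2) = 1 / Real.sqrt 2 ∧
      (1 / Real.sqrt 2) ^ 2 < 1 / Real.sqrt 2 := by
  intro M hM w hw
  have h2 : Real.sqrt 2 > 0 := by positivity
  have hs2 : Real.sqrt 2 ^ 2 = 2 := Real.sq_sqrt (by norm_num)
  subst hM hw
  refine ⟨?_, ?_, ?_, ?_, ?_, ?_, ?_⟩
  · ext i j; fin_cases i <;> fin_cases j <;> simp [Matrix.IsSymm]
  · constructor
    · ext i j; fin_cases i <;> fin_cases j <;> rfl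
    · intro x
      have : star x ⬝ᵥ (!![1/2, -1/2; -1/2, 1/2] : Matrix (Fin 2) (Fin 2) ℝ).mulVec x
          = (x 0 - x 1)^2 / 2 := by
        simp [dotProduct, Matrix.mulVec, Fin.sum_univ_two]
        ring
      simp [Finsupp.sum_fintype, Fin.sum_univ_two]
      nlinarith [sq_nonneg (x 0 - x 1)]
  · intro v hv hv1
    have hmv : ∑ i, ((!![1/2, -1/2; -1/2, 1/2] : Matrix (Fin 2) (Fin 2) ℝ).mulVec v i) ^ 2
        = (v 0 - v 1)^2 / 2 := by
      simp [Matrix.mulVec, dotProduct, Fin.sum_univ_two]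
      ring
    rw [hmv]
    have hle : (v 0 - v 1)^2 / 2 ≤ 1 / 2 := by
      have := mul_nonneg (hv 0) (hv 1)
      nlinarith
    calc Real.sqrt ((v 0 - v 1)^2 / 2) ≤ Real.sqrt (1/2) := Real.sqrt_le_sqrt hle
      _ = 1 / Real.sqrt 2 := by
          rw [one_div, one_div, Real.sqrt_inv]
  · intro p; dsimp; split <;> positivity
  · have : ∑ p : Fin 2 × Fin 2, ((if p.1 = p.2 then 1 / Real.sqrt 2 else 0) ^ 2) = 1 := by
      rw [Fintype.sum_prod_type]
      simp [Fin.sum_univ_two]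
    rw [this, Real.sqrt_one]
  · have hsum : ∑ p : Fin 2 × Fin 2,
        (((!![1/2, -1/2; -1/2, 1/2] : Matrix (Fin 2) (Fin 2) ℝ) ⊗ₖ !![1/2, -1/2; -1/2, 1/2]).mulVec
          (fun p => if p.1 = p.2 then 1 / Real.sqrt 2 else 0) p) ^ 2 = 1/2 := by
      rw [Fintype.sum_prod_type]
      simp [Matrix.mulVec, dotProduct, Fintype.sum_prod_type, Matrix.kroneckerMap_apply,
        Fin.sum_univ_two]
      field_simp
      nlinarith
    rw [hsum, one_div, Real.sqrt_inv, one_div]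
  · have h1 : Real.sqrt 2 > 1 := by
      nlinarith [Real.sq_sqrt (show (0:ℝ) ≤ 2 by norm_num)]
    rw [div_pow, one_pow, hs2]
    rw [div_lt_div_iff₀ (by norm_num) h2]
    nlinarith
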